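/- Let f, g be holomorphic on an open set U ⊆ ℂⁿ and let F(z) = f(z)·conj(g(z)). Then a point z ∈ U is a singular point of F (i.e. fderiv ℝ F z : ℂⁿ → ℂ is not surjective) if and only if there exists λ ∈ ℂ with |λ| = 1 such that g(z)·conj(∇f(z)) = λ·f(z)·conj(∇g(z)) as vectors in ℂⁿ. (Equation (2.4), the characterisation of Sing f·ḡ.) -/

import Mathlib

open Complex Filter Function Metric

noncomputable section

/-- `ℂⁿ` with its Euclidean (Hermitian) norm. -/
abbrev Cn (n : ℕ) := EuclideanSpace ℂ (Fin n)

/-- Complex gradient `∇f(z) = (∂f/∂z₁,…,∂f/∂zₙ)(z)` of a holomorphic function `f`. -/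
def gradC {n : ℕ} (f : Cn n → ℂ) (z : Cn n) : Cn n :=
  WithLp.toLp 2 fun k => fderiv ℂ f z (EuclideanSpace.single k 1)

/-- Componentwise complex conjugate of a vector in `ℂⁿ`. -/
def conjVec {n : ℕ} (v : Cn n) : Cn n := WithLp.toLp 2 fun k => starRingEnd ℂ (v k)

lemma Cn.sum_single {n : ℕ} (v : Cn n) : ∑ k, v k • EuclideanSpace.single k 1 = v := by
  ext j
  rw [WithLp.ofLp_sum, Finset.sum_apply]
  simp [EuclideanSpace.single_apply]

lemma clm_apply_sum {n : ℕ} (T : Cn n →L[ℂ] ℂ) (v : Cn n) :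
    T v = ∑ k, v k * T (EuclideanSpace.single k 1) := by
  conv_lhs => rw [← Cn.sum_single v]
  rw [map_sum]; simp [smul_eq_mul]

lemma clm_ext' {n : ℕ} {T S : Cn n →L[ℂ] ℂ}
    (h : ∀ k, T (EuclideanSpace.single k 1) = S (EuclideanSpace.single k 1)) : T = S := by
  ext v
  rw [clm_apply_sum, clm_apply_sum]
  simp [h]

lemma key_surj {E : Type*} [NormedAddCommGroup E] [NormedSpace ℂ E] (Φ Ψ : E →L[ℂ] ℂ) :
    ¬ Surjective (fun v => Φ v + (starRingEnd ℂ) (Ψ v)) ↔ ∃ μ : ℂ, ‖μ‖ = 1 ∧ Φ = μ • Ψ := by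
  constructor
  · intro hns
    by_contra h
    push_neg at h
    apply hns
    by_cases hΨ : Ψ = 0
    · have hΦ : Φ ≠ 0 := by
        intro h0
        exact (h 1 (by simp)) (by rw [h0, hΨ, one_smul])
      obtain ⟨v₀, hv₀'⟩ := DFunLike.ne_iff.mp hΦ
      have hv₀ : Φ v₀ ≠ 0 := by simpa using hv₀'
      intro c
      refine ⟨(c / Φ v₀) • v₀, ?_⟩
      simp only [map_smul, smul_eq_mul, hΨ, ContinuousLinearMap.zero_apply, mul_zero, map_zero,
        add_zero]
      field_simp
    · obtain ⟨v₁, hv₁'⟩ := DFunLike.ne_iff.mp hΨ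
      have hv₁ : Ψ v₁ ≠ 0 := by simpa using hv₁'
      set w₀ : E := (Ψ v₁)⁻¹ • v₁ with hw₀def
      have hΨw₀ : Ψ w₀ = 1 := by
        simp [hw₀def, map_smul, smul_eq_mul, inv_mul_cancel₀ hv₁]
      by_cases hker : ∀ u, Ψ u = 0 → Φ u = 0
      · have hc : ∀ v, Φ v = Φ w₀ * Ψ v := by
          intro v
          have h0 : Ψ (v - Ψ v • w₀) = 0 := by
            simp [map_sub, map_smul, hΨw₀, smul_eq_mul]
          have h1 := hker _ h0
          simp only [map_sub, map_smul, smul_eq_mul, sub_eq_zero] at h1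
          rw [h1]; ring
        set a := Φ w₀ with ha
        have hΦeq : Φ = a • Ψ := ContinuousLinearMap.ext fun v => by
          rw [hc v]; simp [smul_eq_mul]
        have hnorm : ‖a‖ ≠ 1 := fun h1 => (h a h1) hΦeq
        have hd : (Complex.normSq a : ℂ) - 1 ≠ 0 := by
          intro h0
          apply hnorm
          have h2 : (Complex.normSq a : ℂ) = 1 := sub_eq_zero.mp h0
          have h3 : Complex.normSq a = 1 := by exact_mod_cast h2
          have := Complex.normSq_eq_norm_sq a
          rw [h3] at this
          have habs : ‖a‖ ^ 2 = 1 := this.symm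
          have : ‖a‖ = 1 := by nlinarith [norm_nonneg a]
          exact this
        intro c
        set t : ℂ := (starRingEnd ℂ a * c - starRingEnd ℂ c) / ((Complex.normSq a : ℂ) - 1) with ht
        refine ⟨t • w₀, ?_⟩
        have hct : starRingEnd ℂ t = (a * starRingEnd ℂ c - c) / ((Complex.normSq a : ℂ) - 1) := by
          rw [ht]
          rw [map_div₀, map_sub, map_mul, Complex.conj_conj, Complex.conj_conj, map_sub,
            Complex.conj_ofReal, map_one]
        have hmc : a * starRingEnd ℂ a = (Complex.normSq a : ℂ) := Complex.mul_conj a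
        simp only [map_smul, smul_eq_mul, hΨw₀, mul_one, hc w₀, ← ha]
        rw [hct, ht]
        field_simp
        ring_nf
        linear_combination c * hmc
      · push_neg at hker
        obtain ⟨u, hu0, huΦ⟩ := hker
        intro c
        refine ⟨(c / Φ u) • u, ?_⟩
        simp only [map_smul, smul_eq_mul, hu0, mul_zero, map_zero, add_zero]
        field_simp
  · rintro ⟨μ, hμ, hΦ⟩
    subst hΦ
    intro hs
    have hμμ : starRingEnd ℂ μ * μ = 1 := by
      rw [mul_comm, Complex.mul_conj]
      norm_cast
      simp [Complex.normSq_eq_norm_sq, hμ]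
    have key : ∀ c : ℂ, starRingEnd ℂ c = starRingEnd ℂ μ * c := by
      intro c
      obtain ⟨v, hv⟩ := hs c
      rw [← hv]
      simp only [ContinuousLinearMap.smul_apply, smul_eq_mul, map_add, map_mul, Complex.conj_conj]
      linear_combination (-(Ψ v)) * hμμ
    have h1 := key 1
    simp only [map_one, mul_one] at h1
    have h2 := key Complex.I
    rw [Complex.conj_I, ← h1] at h2
    have : Complex.I = 0 := by linear_combination -h2/2
    exact Complex.I_ne_zero this

/-- **Equation (2.4): the characterisation of `Sing f·ḡ`.**  For `f, g` holomorphic on an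
open `U ⊆ ℂⁿ` and `F = f·ḡ : z ↦ f z * conj (g z)`, a point `z ∈ U` is a singular point of
`F` (i.e. `fderiv ℝ F z : ℂⁿ → ℂ` is not surjective) if and only if
`g(z)·conj(∇f(z)) = λ·f(z)·conj(∇g(z))` for some `λ ∈ ℂ` with `|λ| = 1`. -/
theorem sing_fgbar_characterisation
    {n : ℕ} (U : Set (Cn n)) (hU : IsOpen U)
    (f g : Cn n → ℂ) (hf : DifferentiableOn ℂ f U) (hg : DifferentiableOn ℂ g U)
    (F : Cn n → ℂ) (hF : ∀ z, F z = f z * starRingEnd ℂ (g z))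
    (z : Cn n) (hz : z ∈ U) :
    ¬ Surjective ⇑(fderiv ℝ F z) ↔
      ∃ lam : ℂ, ‖lam‖ = 1 ∧
        g z • conjVec (gradC f z) = lam • (f z • conjVec (gradC g z)) := by
  have hfz : DifferentiableAt ℂ f z := hf.differentiableAt (hU.mem_nhds hz)
  have hgz : DifferentiableAt ℂ g z := hg.differentiableAt (hU.mem_nhds hz)
  set Df := fderiv ℂ f z with hDf
  set Dg := fderiv ℂ g z with hDg
  have h1 : HasFDerivAt f (Df.restrictScalars ℝ) z := hfz.hasFDerivAt.restrictScalars ℝ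
  have hg1 : HasFDerivAt g (Dg.restrictScalars ℝ) z := hgz.hasFDerivAt.restrictScalars ℝ
  have h2 : HasFDerivAt (fun w => (starRingEnd ℂ) (g w))
      ((Complex.conjCLE.toContinuousLinearMap).comp (Dg.restrictScalars ℝ)) z :=
    (Complex.conjCLE.toContinuousLinearMap.hasFDerivAt).comp z hg1
  have h3 := h1.mul h2
  have hFe : F = fun w => f w * starRingEnd ℂ (g w) := funext hF
  have hD : fderiv ℝ F z
      = f z • ((Complex.conjCLE.toContinuousLinearMap).comp (Dg.restrictScalars ℝ))
        + starRingEnd ℂ (g z) • (Df.restrictScalars ℝ) := by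
    rw [hFe]
    exact h3.fderiv
  set Φ : Cn n →L[ℂ] ℂ := starRingEnd ℂ (g z) • Df with hΦdef
  set Ψ : Cn n →L[ℂ] ℂ := starRingEnd ℂ (f z) • Dg with hΨdef
  have happ : ⇑(fderiv ℝ F z) = fun v => Φ v + starRingEnd ℂ (Ψ v) := by
    funext v
    rw [hD]
    simp only [ContinuousLinearMap.add_apply, ContinuousLinearMap.smul_apply,
      ContinuousLinearMap.coe_comp', comp_apply, ContinuousLinearMap.coe_restrictScalars',
      hΦdef, hΨdef, smul_eq_mul, map_mul, Complex.conj_conj]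
    simp [smul_eq_mul]
    ring
  rw [happ, key_surj Φ Ψ]
  constructor
  · rintro ⟨μ, hμ, hE⟩
    refine ⟨starRingEnd ℂ μ, by simpa using hμ, ?_⟩
    ext k
    have hk := congrArg (fun T => starRingEnd ℂ (T (EuclideanSpace.single k 1))) hE
    simp only [ContinuousLinearMap.smul_apply, smul_eq_mul, map_mul, Complex.conj_conj,
      hΦdef, hΨdef] at hk
    simp only [PiLp.smul_apply, smul_eq_mul, conjVec, gradC, PiLp.toLp_apply, ← hDf, ← hDg]
    rw [hk]
  · rintro ⟨lam, hlam, hE⟩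
    refine ⟨starRingEnd ℂ lam, by simpa using hlam, ?_⟩
    apply clm_ext'
    intro k
    have hk := congrArg (fun v => v k) hE
    simp only [PiLp.smul_apply, smul_eq_mul, conjVec, gradC, PiLp.toLp_apply, ← hDf, ← hDg] at hk
    have hk' := congrArg (starRingEnd ℂ) hk
    simp only [map_mul, Complex.conj_conj] at hk'
    simp only [ContinuousLinearMap.smul_apply, smul_eq_mul, hΦdef, hΨdef]
    rw [hk']
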